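/- arXiv:1211.7191 — 6 statements merged into one kernel-verified Lean document; each statement's English description precedes it below -/
import Mathlib

section
/- Let μ be a probability measure on a measurable space E and U : E → [0,∞) a bounded measurable function, and m ≥ 1. Then the total variation distance between Ψ_{exp(-U/m)}(μ) and μ is at most sup_x (1 - exp(-U(x)/m)), which is at most (sup U)/m. Here ‖ν₁ - ν₂‖_tv := sup{|ν₁(f) - ν₂(f)| : f measurable with osc(f) ≤ 1}. -/
open MeasureTheory

lemma aux3 {E : Type*} [MeasurableSpace E] [Nonempty E] (μ : Measure E)
    [IsProbabilityMeasure μ] (G : E → ℝ) (hGm : Measurable G)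
    (hg0 : ∀ x, 0 < G x) (hg1 : ∀ x, G x ≤ 1)
    (glb : ℝ) (hglb0 : 0 < glb) (hglb : ∀ x, glb ≤ G x)
    (f : E → ℝ) (hf : Measurable f) (hosc : ∀ x y, |f x - f y| ≤ 1) :
    |(∫ x, f x * G x ∂μ) / (∫ x, G x ∂μ) - ∫ x, f x ∂μ| ≤ ⨆ x, (1 - G x) := by
  obtain ⟨x0⟩ := ‹Nonempty E›
  have hint : ∀ (h : E → ℝ) (C : ℝ), Measurable h → (∀ x, |h x| ≤ C) → Integrable h μ :=
    fun h C hh hbd => (integrable_const C).mono' hh.aestronglyMeasurable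
      (Filter.Eventually.of_forall fun x => by simpa using hbd x)
  have hGint : Integrable G μ := hint G 1 hGm fun x => abs_le.2 ⟨by linarith [hg0 x], hg1 x⟩
  set a : ℝ := ∫ x, G x ∂μ with ha
  have ha_pos : 0 < a := by
    have h1 : (∫ x, glb ∂μ) ≤ a := integral_mono (integrable_const _) hGint hglb
    have h2 : (∫ x, glb ∂μ) = glb := by simp
    linarith
  have ha1 : a ≤ 1 := by
    have h1 : a ≤ ∫ x, (1:ℝ) ∂μ := integral_mono hGint (integrable_const 1) hg1
    simpa using h1
  set c : ℝ := ⨆ x, (1 - G x) with hc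
  have hc_bdd : BddAbove (Set.range fun x => 1 - G x) := by
    refine ⟨1, ?_⟩
    rintro _ ⟨x, rfl⟩
    show 1 - G x ≤ 1
    have := hg0 x; linarith
  have hc_le : ∀ x, 1 - G x ≤ c := fun x => le_ciSup hc_bdd x
  have hc0 : 0 ≤ c := le_trans (by linarith [hg1 x0]) (hc_le x0)
  -- bounds on f
  have hfb : ∀ x, |f x| ≤ |f x0| + 1 := by
    intro x
    have h1 := hosc x x0
    have h2 := abs_sub_abs_le_abs_sub (f x) (f x0)
    linarith
  have hf_int : Integrable f μ := hint f _ hf hfb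
  have hS_bdd : BddAbove (Set.range f) := by
    refine ⟨f x0 + 1, ?_⟩
    rintro _ ⟨x, rfl⟩
    have := abs_le.1 (hosc x x0); linarith [this.2]
  have hI_bdd : BddBelow (Set.range f) := by
    refine ⟨f x0 - 1, ?_⟩
    rintro _ ⟨x, rfl⟩
    have := abs_le.1 (hosc x x0); linarith [this.1]
  set S : ℝ := sSup (Set.range f) with hSdef
  set I : ℝ := sInf (Set.range f) with hIdef
  have hfS : ∀ x, f x ≤ S := fun x => le_csSup hS_bdd (Set.mem_range_self x)
  have hIf : ∀ x, I ≤ f x := fun x => csInf_le hI_bdd (Set.mem_range_self x)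
  have hSI : S - I ≤ 1 := by
    have h1 : ∀ x, f x ≤ I + 1 := by
      intro x
      have h2 : f x - 1 ≤ I := by
        refine le_csInf (Set.range_nonempty f) ?_
        rintro _ ⟨y, rfl⟩
        have := abs_le.1 (hosc x y); linarith [this.2]
      linarith
    have h3 : S ≤ I + 1 := csSup_le (Set.range_nonempty f) (by rintro _ ⟨x, rfl⟩; exact h1 x)
    linarith
  -- density
  set g : E → ℝ := fun x => G x / a - 1 with hgdef
  set p : E → ℝ := fun x => max (g x) 0 with hpdef
  set q : E → ℝ := fun x => max (-g x) 0 with hqdef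
  have hgm : Measurable g := (hGm.div_const a).sub measurable_const
  have hgb : ∀ x, |g x| ≤ 1 / a + 1 := by
    intro x
    rw [abs_le]
    have h1 : 0 ≤ G x / a := div_nonneg (hg0 x).le ha_pos.le
    have h2 : G x / a ≤ 1 / a := by gcongr; exact hg1 x
    constructor <;> simp only [hgdef] <;> nlinarith [ha_pos]
  have h0a : (0:ℝ) ≤ 1 / a := by positivity
  have hpb : ∀ x, |p x| ≤ 1 / a + 1 := by
    intro x
    rw [abs_le]
    constructor
    · have := le_max_right (g x) (0:ℝ); linarith
    · exact max_le (le_trans (le_abs_self _) (hgb x)) (by linarith)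
  have hqb : ∀ x, |q x| ≤ 1 / a + 1 := by
    intro x
    rw [abs_le]
    constructor
    · have := le_max_right (-g x) (0:ℝ); linarith
    · exact max_le (le_trans (le_abs_self _) (by rw [abs_neg]; exact hgb x)) (by linarith)
  have hp_int : Integrable p μ := hint p _ (hgm.max measurable_const) hpb
  have hq_int : Integrable q μ := hint q _ (hgm.neg.max measurable_const) hqb
  have hpq : ∀ x, g x = p x - q x := by
    intro x
    rcases le_total (g x) 0 with h | h
    · rw [hpdef, hqdef]; simp only
      rw [max_eq_right h, max_eq_left (neg_nonneg.2 h)]; ring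
    · rw [hpdef, hqdef]; simp only
      rw [max_eq_left h, max_eq_right (neg_nonpos.2 h)]; ring
  have hg_zero : ∫ x, g x ∂μ = 0 := by
    have : ∫ x, g x ∂μ = (∫ x, G x ∂μ) / a - 1 := by
      rw [hgdef]
      rw [integral_sub (hGint.div_const a) (integrable_const 1)]
      simp [integral_div]
    rw [this, ← ha, div_self ha_pos.ne']
    ring
  set t : ℝ := ∫ x, q x ∂μ with htdef
  have ht0 : 0 ≤ t := integral_nonneg fun x => le_max_right _ _
  have hpt : ∫ x, p x ∂μ = t := by
    have h1 : ∫ x, (p x - q x) ∂μ = 0 := by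
      rw [integral_congr_ae (Filter.Eventually.of_forall fun x => (hpq x).symm)]
      exact hg_zero
    rw [integral_sub hp_int hq_int] at h1
    linarith
  have htc : t ≤ c := by
    have hqc : ∀ x, q x ≤ c := by
      intro x
      refine max_le ?_ hc0
      have h1 : G x ≤ G x / a := by
        rw [le_div_iff₀ ha_pos]
        exact mul_le_of_le_one_right (hg0 x).le ha1
      have h2 := hc_le x
      simp only [hgdef]
      linarith
    have := integral_mono hq_int (integrable_const c) hqc
    simpa using this
  -- integrability of products
  have hfp_int : Integrable (fun x => f x * p x) μ :=
    hint _ ((|f x0| + 1) * (1 / a + 1)) (hf.mul (hgm.max measurable_const))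
      (fun x => by rw [abs_mul]; exact mul_le_mul (hfb x) (hpb x) (abs_nonneg _) (by positivity))
  have hfq_int : Integrable (fun x => f x * q x) μ :=
    hint _ ((|f x0| + 1) * (1 / a + 1)) (hf.mul (hgm.neg.max measurable_const))
      (fun x => by rw [abs_mul]; exact mul_le_mul (hfb x) (hqb x) (abs_nonneg _) (by positivity))
  have hfG_int : Integrable (fun x => f x * G x) μ :=
    hint _ ((|f x0| + 1) * 1) (hf.mul hGm)
      (fun x => by
        rw [abs_mul]
        exact mul_le_mul (hfb x) (abs_le.2 ⟨by linarith [hg0 x], hg1 x⟩) (abs_nonneg _) (by positivity))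
  -- key rewriting
  have key : (∫ x, f x * G x ∂μ) / a - ∫ x, f x ∂μ = ∫ x, f x * g x ∂μ := by
    have h1 : ∀ x, f x * g x = (f x * G x) / a - f x := by
      intro x; rw [hgdef]; field_simp
    rw [integral_congr_ae (Filter.Eventually.of_forall h1),
      integral_sub (hfG_int.div_const a) hf_int, integral_div]
  have hsplit : ∫ x, f x * g x ∂μ = (∫ x, f x * p x ∂μ) - ∫ x, f x * q x ∂μ := by
    rw [← integral_sub hfp_int hfq_int]
    refine integral_congr_ae (Filter.Eventually.of_forall fun x => ?_)
    show f x * g x = f x * p x - f x * q x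
    rw [hpq x]; ring
  have hfg_int : Integrable (fun x => f x * g x) μ := by
    have : (fun x => f x * g x) = fun x => f x * p x - f x * q x := by
      funext x; rw [hpq x]; ring
    rw [this]; exact hfp_int.sub hfq_int
  -- bounds
  have hub_p : ∫ x, f x * p x ∂μ ≤ S * t := by
    have h1 : ∫ x, f x * p x ∂μ ≤ ∫ x, S * p x ∂μ :=
      integral_mono hfp_int (hp_int.const_mul S)
        (fun x => mul_le_mul_of_nonneg_right (hfS x) (le_max_right _ _))
    rwa [integral_const_mul, hpt] at h1
  have hlb_p : I * t ≤ ∫ x, f x * p x ∂μ := by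
    have h1 : ∫ x, I * p x ∂μ ≤ ∫ x, f x * p x ∂μ :=
      integral_mono (hp_int.const_mul I) hfp_int
        (fun x => mul_le_mul_of_nonneg_right (hIf x) (le_max_right _ _))
    rwa [integral_const_mul, hpt] at h1
  have hub_q : ∫ x, f x * q x ∂μ ≤ S * t := by
    have h1 : ∫ x, f x * q x ∂μ ≤ ∫ x, S * q x ∂μ :=
      integral_mono hfq_int (hq_int.const_mul S)
        (fun x => mul_le_mul_of_nonneg_right (hfS x) (le_max_right _ _))
    rwa [integral_const_mul] at h1
  have hlb_q : I * t ≤ ∫ x, f x * q x ∂μ := by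
    have h1 : ∫ x, I * q x ∂μ ≤ ∫ x, f x * q x ∂μ :=
      integral_mono (hq_int.const_mul I) hfq_int
        (fun x => mul_le_mul_of_nonneg_right (hIf x) (le_max_right _ _))
    rwa [integral_const_mul] at h1
  rw [key, hsplit]
  rw [abs_le]
  constructor
  · nlinarith
  · nlinarith

theorem stmt3 {E : Type*} [MeasurableSpace E] [Nonempty E] (μ : Measure E)
    [IsProbabilityMeasure μ] (U : E → ℝ) (m : ℝ) (hm : 1 ≤ m)
    (hU : Measurable U) (hU0 : ∀ x, 0 ≤ U x) (hUbdd : BddAbove (Set.range U)) :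
    (∀ f : E → ℝ, Measurable f → (∀ x y, |f x - f y| ≤ 1) →
      |(∫ x, f x * Real.exp (-U x / m) ∂μ) / (∫ x, Real.exp (-U x / m) ∂μ) - ∫ x, f x ∂μ|
        ≤ ⨆ x, (1 - Real.exp (-U x / m))) ∧
    (⨆ x, (1 - Real.exp (-U x / m))) ≤ (⨆ x, U x) / m := by
  have hm0 : (0:ℝ) < m := lt_of_lt_of_le one_pos hm
  have hB : ∀ x, U x ≤ ⨆ y, U y := fun x => le_ciSup hUbdd x
  constructor
  · intro f hf hosc
    refine aux3 μ (fun x => Real.exp (-U x / m)) (Real.measurable_exp.comp (hU.neg.div_const m))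
      (fun x => Real.exp_pos _)
      (fun x => Real.exp_le_one_iff.2 (div_nonpos_of_nonpos_of_nonneg (neg_nonpos.2 (hU0 x)) hm0.le))
      (Real.exp (-(⨆ y, U y) / m)) (Real.exp_pos _)
      (fun x => Real.exp_le_exp.2 (by gcongr; exact hB x)) f hf hosc
  · refine ciSup_le fun x => ?_
    have h1 : -(U x / m) + 1 ≤ Real.exp (-(U x / m)) := Real.add_one_le_exp _
    rw [neg_div] at *
    have h2 : U x / m ≤ (⨆ y, U y) / m := by gcongr; exact hB x
    linarith
end

section
/- Let μ be a probability measure on E and V : E → ℝ a bounded measurable function. Then μ(V·f) - μ(V)·μ(f) = ∫∫ (f(y) - f(x))·(V(y) - V(x))₊ μ(dx) μ(dy) for every bounded measurable f, where a₊ = max(a, 0). -/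
open MeasureTheory

private lemma integrable_of_bdd {α : Type*} [MeasurableSpace α] (μ : Measure α)
    [IsFiniteMeasure μ] {g : α → ℝ} (hg : Measurable g) {C : ℝ} (h : ∀ x, |g x| ≤ C) :
    Integrable g μ :=
  ⟨hg.aestronglyMeasurable, HasFiniteIntegral.of_bounded (C := C)
    (Filter.Eventually.of_forall (fun x => by simpa using h x))⟩

theorem stmt6 {E : Type*} [MeasurableSpace E] (μ : Measure E) [IsProbabilityMeasure μ]
    (V f : E → ℝ) (hV : Measurable V) (hVb : ∃ C, ∀ x, |V x| ≤ C)
    (hf : Measurable f) (hfb : ∃ C, ∀ x, |f x| ≤ C) :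
    (∫ x, V x * f x ∂μ) - (∫ x, V x ∂μ) * (∫ x, f x ∂μ)
      = ∫ x, ∫ y, (f y - f x) * max (V y - V x) 0 ∂μ ∂μ := by
  obtain ⟨Cv, hCv⟩ := hVb
  obtain ⟨Cf, hCf⟩ := hfb
  have hCv' : ∀ x, |V x| ≤ max Cv 0 := fun x => (hCv x).trans (le_max_left _ _)
  have hCf' : ∀ x, |f x| ≤ max Cf 0 := fun x => (hCf x).trans (le_max_left _ _)
  set Cv' := max Cv 0
  set Cf' := max Cf 0
  have hCv0 : 0 ≤ Cv' := le_max_right _ _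
  have hCf0 : 0 ≤ Cf' := le_max_right _ _
  set G : E × E → ℝ := fun p => (f p.2 - f p.1) * max (V p.2 - V p.1) 0 with hGdef
  have hGmeas : Measurable G :=
    ((hf.comp measurable_snd).sub (hf.comp measurable_fst)).mul
      (((hV.comp measurable_snd).sub (hV.comp measurable_fst)).max measurable_const)
  have hGbd : ∀ p : E × E, |G p| ≤ (2 * Cf') * (2 * Cv') := by
    intro p
    have h1 : |f p.2 - f p.1| ≤ 2 * Cf' := by
      have := abs_sub (f p.2) (f p.1)
      have h2 := hCf' p.1; have h3 := hCf' p.2; linarith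
    have h4 : |max (V p.2 - V p.1) 0| ≤ 2 * Cv' := by
      have h5 : |max (V p.2 - V p.1) 0| ≤ |V p.2 - V p.1| := by
        rcases le_total (V p.2 - V p.1) 0 with h | h
        · simp [max_eq_right h, abs_nonneg]
        · simp [max_eq_left h]
      have := abs_sub (V p.2) (V p.1)
      have h2 := hCv' p.1; have h3 := hCv' p.2; linarith
    calc |G p| = |f p.2 - f p.1| * |max (V p.2 - V p.1) 0| := abs_mul _ _
      _ ≤ (2 * Cf') * (2 * Cv') := mul_le_mul h1 h4 (abs_nonneg _) (by linarith)
  have hGint : Integrable G (μ.prod μ) := integrable_of_bdd _ hGmeas hGbd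
  have hGswapint : Integrable (fun p : E × E => G p.swap) (μ.prod μ) :=
    integrable_of_bdd _ (hGmeas.comp measurable_swap) (fun p => hGbd p.swap)
  -- iterated integral = product integral
  have h1 : (∫ x, ∫ y, (f y - f x) * max (V y - V x) 0 ∂μ ∂μ)
      = ∫ p, G p ∂(μ.prod μ) := by
    rw [MeasureTheory.integral_prod _ hGint]
  -- symmetry
  have h2 : (∫ p, G p ∂(μ.prod μ)) = ∫ p, G p.swap ∂(μ.prod μ) := by
    rw [integral_prod_swap (f := G)]
  -- sum identity
  have hpt : ∀ p : E × E, G p + G p.swap = (f p.2 - f p.1) * (V p.2 - V p.1) := by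
    intro p
    simp only [hGdef, Prod.snd_swap, Prod.fst_swap]
    rcases le_total (V p.2 - V p.1) 0 with h | h
    · rw [max_eq_right h, max_eq_left (by linarith : (0:ℝ) ≤ V p.1 - V p.2)]; ring
    · rw [max_eq_left h, max_eq_right (by linarith : V p.1 - V p.2 ≤ (0:ℝ))]; ring
  have h3 : (∫ p, G p ∂(μ.prod μ)) + (∫ p, G p.swap ∂(μ.prod μ))
      = ∫ p : E × E, (f p.2 - f p.1) * (V p.2 - V p.1) ∂(μ.prod μ) := by
    rw [← integral_add hGint hGswapint]
    exact integral_congr_ae (Filter.Eventually.of_forall hpt)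
  -- expand the RHS product integral
  have hint1 : Integrable (fun p : E × E => f p.2 * V p.2) (μ.prod μ) := by
    refine integrable_of_bdd _ ((hf.comp measurable_snd).mul (hV.comp measurable_snd))
      (C := Cf' * Cv') (fun p => ?_)
    rw [abs_mul]; exact mul_le_mul (hCf' _) (hCv' _) (abs_nonneg _) hCf0
  have hint2 : Integrable (fun p : E × E => f p.1 * V p.1) (μ.prod μ) := by
    refine integrable_of_bdd _ ((hf.comp measurable_fst).mul (hV.comp measurable_fst))
      (C := Cf' * Cv') (fun p => ?_)
    rw [abs_mul]; exact mul_le_mul (hCf' _) (hCv' _) (abs_nonneg _) hCf0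
  have hint3 : Integrable (fun p : E × E => f p.2 * V p.1) (μ.prod μ) := by
    refine integrable_of_bdd _ ((hf.comp measurable_snd).mul (hV.comp measurable_fst))
      (C := Cf' * Cv') (fun p => ?_)
    rw [abs_mul]; exact mul_le_mul (hCf' _) (hCv' _) (abs_nonneg _) hCf0
  have hint4 : Integrable (fun p : E × E => f p.1 * V p.2) (μ.prod μ) := by
    refine integrable_of_bdd _ ((hf.comp measurable_fst).mul (hV.comp measurable_snd))
      (C := Cf' * Cv') (fun p => ?_)
    rw [abs_mul]; exact mul_le_mul (hCf' _) (hCv' _) (abs_nonneg _) hCf0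
  have hone : (∫ x, (1:ℝ) ∂μ) = 1 := by simp
  have e1 : (∫ p : E × E, f p.2 * V p.2 ∂(μ.prod μ)) = ∫ x, f x * V x ∂μ := by
    have := integral_prod_mul (μ := μ) (ν := μ) (f := fun _ : E => (1:ℝ))
      (g := fun y => f y * V y)
    simpa [hone] using this
  have e2 : (∫ p : E × E, f p.1 * V p.1 ∂(μ.prod μ)) = ∫ x, f x * V x ∂μ := by
    have := integral_prod_mul (μ := μ) (ν := μ) (f := fun x => f x * V x)
      (g := fun _ : E => (1:ℝ))
    simpa [hone] using this
  have e3 : (∫ p : E × E, f p.2 * V p.1 ∂(μ.prod μ)) = (∫ x, V x ∂μ) * ∫ x, f x ∂μ := by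
    have := integral_prod_mul (μ := μ) (ν := μ) (f := V) (g := f)
    rw [← this]
    exact integral_congr_ae (Filter.Eventually.of_forall (fun p => mul_comm _ _))
  have e4 : (∫ p : E × E, f p.1 * V p.2 ∂(μ.prod μ)) = (∫ x, f x ∂μ) * ∫ x, V x ∂μ :=
    integral_prod_mul (μ := μ) (ν := μ) (f := f) (g := V)
  have h4 : (∫ p : E × E, (f p.2 - f p.1) * (V p.2 - V p.1) ∂(μ.prod μ))
      = 2 * ((∫ x, V x * f x ∂μ) - (∫ x, V x ∂μ) * (∫ x, f x ∂μ)) := by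
    have expand : (fun p : E × E => (f p.2 - f p.1) * (V p.2 - V p.1))
        = fun p => f p.2 * V p.2 + f p.1 * V p.1 - (f p.2 * V p.1 + f p.1 * V p.2) := by
      funext p; ring
    rw [expand]
    have hs := integral_sub (hint1.add hint2) (hint3.add hint4)
    simp only [Pi.add_apply] at hs
    rw [hs, integral_add hint1 hint2, integral_add hint3 hint4, e1, e2, e3, e4]
    have : (∫ x, f x * V x ∂μ) = ∫ x, V x * f x ∂μ :=
      integral_congr_ae (Filter.Eventually.of_forall (fun x => mul_comm _ _))
    rw [this]; ring
  rw [h1]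
  have : 2 * (∫ p, G p ∂(μ.prod μ))
      = 2 * ((∫ x, V x * f x ∂μ) - (∫ x, V x ∂μ) * (∫ x, f x ∂μ)) := by
    rw [two_mul]; nth_rewrite 2 [h2]; rw [h3, h4]
  linarith
end

section
/- Let μ, ν be probability measures on E and G : E → ℝ bounded measurable with inf G > 0. Then for any bounded measurable f, Ψ_G(μ)(f) - Ψ_G(ν)(f) = (ν(G)/μ(G))·(μ - ν)( (G/ν(G))·(f - Ψ_G(ν)(f)) ). -/
open MeasureTheory

lemma intble_bdd {E : Type*} [MeasurableSpace E] (μ : Measure E)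
    [IsProbabilityMeasure μ] (g : E → ℝ) (hg : Measurable g)
    (hgb : ∃ C, ∀ x, |g x| ≤ C) : Integrable g μ := by
  obtain ⟨C, hC⟩ := hgb
  exact (integrable_const C).mono' hg.aestronglyMeasurable
    (Filter.Eventually.of_forall fun x => by simpa using hC x)

theorem stmt12 {E : Type*} [MeasurableSpace E] (μ ν : Measure E)
    [IsProbabilityMeasure μ] [IsProbabilityMeasure ν]
    (G f : E → ℝ) (hG : Measurable G) (hGb : ∃ C, ∀ x, |G x| ≤ C)
    (hGpos : ∃ ε > 0, ∀ x, ε ≤ G x)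
    (hf : Measurable f) (hfb : ∃ C, ∀ x, |f x| ≤ C) :
    (∫ x, f x * G x ∂μ) / (∫ x, G x ∂μ) - (∫ x, f x * G x ∂ν) / (∫ x, G x ∂ν)
      = ((∫ x, G x ∂ν) / (∫ x, G x ∂μ)) *
        ((∫ x, (G x / (∫ y, G y ∂ν)) *
            (f x - (∫ y, f y * G y ∂ν) / (∫ y, G y ∂ν)) ∂μ)
          - ∫ x, (G x / (∫ y, G y ∂ν)) *
              (f x - (∫ y, f y * G y ∂ν) / (∫ y, G y ∂ν)) ∂ν) := by
  obtain ⟨ε, hε, hεG⟩ := hGpos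
  obtain ⟨Cf, hCf⟩ := hfb
  obtain ⟨Cg, hCg⟩ := hGb
  have hfG : Measurable fun x => f x * G x := hf.mul hG
  have hfGb : ∃ C, ∀ x, |f x * G x| ≤ C := by
    refine ⟨Cf * Cg, fun x => ?_⟩
    rw [abs_mul]
    exact mul_le_mul (hCf x) (hCg x) (abs_nonneg _) ((abs_nonneg _).trans (hCf x))
  have hGμ : Integrable G μ := intble_bdd μ G hG ⟨Cg, hCg⟩
  have hGν : Integrable G ν := intble_bdd ν G hG ⟨Cg, hCg⟩
  have hfGμ : Integrable (fun x => f x * G x) μ := intble_bdd μ _ hfG hfGb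
  have hfGν : Integrable (fun x => f x * G x) ν := intble_bdd ν _ hfG hfGb
  set a := ∫ x, G x ∂μ with ha
  set b := ∫ x, G x ∂ν with hb
  set c := ∫ x, f x * G x ∂μ with hc
  set d := ∫ x, f x * G x ∂ν with hd
  have hapos : 0 < a := lt_of_lt_of_le hε (by
    calc ε = ∫ _, ε ∂μ := by simp
    _ ≤ a := integral_mono (integrable_const ε) hGμ hεG)
  have hbpos : 0 < b := lt_of_lt_of_le hε (by
    calc ε = ∫ _, ε ∂ν := by simp
    _ ≤ b := integral_mono (integrable_const ε) hGν hεG)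
  have key : ∀ (ρ : Measure E), IsProbabilityMeasure ρ → Integrable G ρ →
      Integrable (fun x => f x * G x) ρ →
      (∫ x, (G x / b) * (f x - d / b) ∂ρ)
        = (∫ x, f x * G x ∂ρ) / b - (d / b) * (∫ x, G x ∂ρ) / b := by
    intro ρ _ hGρ hfGρ
    have : ∀ x, (G x / b) * (f x - d / b)
        = (f x * G x) / b - (d / (b * b)) * G x := by
      intro x; field_simp
    simp_rw [this]
    rw [integral_sub (hfGρ.div_const b) (hGρ.const_mul _), integral_div,
      integral_const_mul]
    ring
  rw [key μ inferInstance hGμ hfGμ, key ν inferInstance hGν hfGν]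
  rw [← hc, ← hd, ← ha, ← hb]
  field_simp
  ring
end

section
/- Let μ, ν be probability measures on E, G : E → ℝ bounded measurable with inf G > 0, and P a Markov kernel on E. Define Φ(η) := Ψ_G(η)P for η ∈ P(E). Then ‖Φ(μ) - Φ(ν)‖_tv ≤ 2·g·β(P)·‖μ - ν‖_tv, where g := sup_{x,y} G(x)/G(y), β(P) := sup{osc(P(f)) : osc(f) ≤ 1} is the Dobrushin contraction coefficient, and ‖η‖_tv := sup{|η(f)| : osc(f) ≤ 1}. -/
open MeasureTheory ProbabilityTheory

section Aux
variable {E : Type*} [MeasurableSpace E]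

lemma aux_int (μ : Measure E) [IsFiniteMeasure μ] {h : E → ℝ} (hm : Measurable h)
    {C : ℝ} (hb : ∀ x, |h x| ≤ C) : Integrable h μ :=
  ⟨hm.aestronglyMeasurable, HasFiniteIntegral.of_bounded (C := C)
    (Filter.Eventually.of_forall (by simpa [Real.norm_eq_abs] using hb))⟩

lemma aux_diff (ρ σ : Measure E) [IsProbabilityMeasure ρ] [IsProbabilityMeasure σ]
    [Nonempty E] {g : E → ℝ} (hm : Measurable g) {D : ℝ}
    (hosc : ∀ x y, |g x - g y| ≤ D) : |(∫ x, g x ∂ρ) - ∫ x, g x ∂σ| ≤ 2 * D := by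
  obtain ⟨x0⟩ := (inferInstance : Nonempty E)
  have hD : 0 ≤ D := le_trans (abs_nonneg _) (hosc x0 x0)
  have hb : ∀ x, |g x| ≤ |g x0| + D := fun x => by
    have := hosc x x0; have := abs_sub_abs_le_abs_sub (g x) (g x0); linarith
  have key : ∀ (τ : Measure E), IsProbabilityMeasure τ → |(∫ x, g x ∂τ) - g x0| ≤ D := by
    intro τ hτ
    have hint : Integrable g τ := aux_int τ hm hb
    have h1 : (∫ x, g x ∂τ) - g x0 = ∫ x, g x - g x0 ∂τ := by
      rw [integral_sub hint (integrable_const _), integral_const]; simp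
    rw [h1]
    calc |∫ x, g x - g x0 ∂τ| ≤ ∫ x, |g x - g x0| ∂τ := by
          simpa [Real.norm_eq_abs] using norm_integral_le_integral_norm (fun x => g x - g x0) (μ := τ)
      _ ≤ ∫ _x, D ∂τ := integral_mono (hint.sub (integrable_const _)).abs (integrable_const _)
            (fun x => hosc x x0)
      _ = D := by simp
  have h1 := key ρ inferInstance
  have h2 := key σ inferInstance
  have : |(∫ x, g x ∂ρ) - ∫ x, g x ∂σ| ≤ |(∫ x, g x ∂ρ) - g x0| + |(∫ x, g x ∂σ) - g x0| := by
    rw [abs_sub_comm ((∫ x, g x ∂σ)) (g x0)]; exact abs_sub_le _ _ _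
  linarith

lemma aux_tv (μ ν : Measure E) [IsProbabilityMeasure μ] [IsProbabilityMeasure ν]
    [Nonempty E] {h : E → ℝ} (hm : Measurable h) {D : ℝ} (hD : 0 ≤ D)
    (hosc : ∀ x y, |h x - h y| ≤ D) :
    |(∫ x, h x ∂μ) - ∫ x, h x ∂ν| ≤ D *
      sSup {r : ℝ | ∃ g : E → ℝ, Measurable g ∧ (∀ x y, |g x - g y| ≤ 1) ∧
        r = |(∫ x, g x ∂μ) - ∫ x, g x ∂ν|} := by
  have hbdd : BddAbove {r : ℝ | ∃ g : E → ℝ, Measurable g ∧ (∀ x y, |g x - g y| ≤ 1) ∧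
      r = |(∫ x, g x ∂μ) - ∫ x, g x ∂ν|} := by
    refine ⟨2, fun r hr => ?_⟩
    obtain ⟨g, hg, hgo, rfl⟩ := hr
    simpa using aux_diff μ ν hg hgo
  rcases eq_or_lt_of_le hD with hD0 | hDpos
  · -- D = 0 : h is constant
    obtain ⟨x0⟩ := (inferInstance : Nonempty E)
    have : ∀ x, h x = h x0 := fun x => by
      have := hosc x x0; rw [← hD0] at this
      have := abs_nonneg (h x - h x0); have h2 := le_antisymm this (by linarith); 
      have := abs_eq_zero.mp (le_antisymm (by rw [hD0] at *; exact hosc x x0) (abs_nonneg _))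
      linarith
    have e1 : (∫ x, h x ∂μ) = h x0 := by
      rw [show h = fun _ => h x0 from funext this]; simp
    have e2 : (∫ x, h x ∂ν) = h x0 := by
      rw [show h = fun _ => h x0 from funext this]; simp
    rw [e1, e2, sub_self, abs_zero, ← hD0, zero_mul]
  · set g : E → ℝ := fun x => h x / D with hgdef
    have hgo : ∀ x y, |g x - g y| ≤ 1 := fun x y => by
      rw [hgdef]; simp only
      rw [div_sub_div_same, abs_div, abs_of_pos hDpos, div_le_one hDpos]
      exact hosc x y
    have hmem : |(∫ x, g x ∂μ) - ∫ x, g x ∂ν| ∈ {r : ℝ | ∃ g : E → ℝ, Measurable g ∧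
        (∀ x y, |g x - g y| ≤ 1) ∧ r = |(∫ x, g x ∂μ) - ∫ x, g x ∂ν|} :=
      ⟨g, hm.div_const D, hgo, rfl⟩
    have hle := le_csSup hbdd hmem
    have e1 : (∫ x, g x ∂μ) = (∫ x, h x ∂μ) / D := by rw [hgdef]; exact integral_div D h
    have e2 : (∫ x, g x ∂ν) = (∫ x, h x ∂ν) / D := by rw [hgdef]; exact integral_div D h
    rw [e1, e2, div_sub_div_same, abs_div, abs_of_pos hDpos, div_le_iff₀ hDpos] at hle
    linarith [hle]

end Aux

theorem stmt13 {E : Type*} [MeasurableSpace E] (μ ν : Measure E)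
    [IsProbabilityMeasure μ] [IsProbabilityMeasure ν]
    (G : E → ℝ) (hG : Measurable G) (hGb : ∃ C, ∀ x, |G x| ≤ C)
    (hGpos : ∃ ε > 0, ∀ x, ε ≤ G x)
    (P : Kernel E E) [IsMarkovKernel P] :
    ∀ f : E → ℝ, Measurable f → (∀ x y, |f x - f y| ≤ 1) →
      |(∫ x, (∫ z, f z ∂(P x)) * G x ∂μ) / (∫ x, G x ∂μ)
        - (∫ x, (∫ z, f z ∂(P x)) * G x ∂ν) / (∫ x, G x ∂ν)|
      ≤ 2 * (⨆ x, ⨆ y, G x / G y)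
          * (sSup {r : ℝ | ∃ g : E → ℝ, Measurable g ∧ (∀ x y, |g x - g y| ≤ 1) ∧
                r = ⨆ x, ⨆ y, |(∫ z, g z ∂(P x)) - ∫ z, g z ∂(P y)|})
          * (sSup {r : ℝ | ∃ g : E → ℝ, Measurable g ∧ (∀ x y, |g x - g y| ≤ 1) ∧
                r = |(∫ x, g x ∂μ) - ∫ x, g x ∂ν|}) := by
  intro f hf hosc
  have hNE : Nonempty E := μ.nonempty_of_neZero
  obtain ⟨x0⟩ := hNE
  have hNE : Nonempty E := ⟨x0⟩
  obtain ⟨C, hC⟩ := hGb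
  obtain ⟨ε, hε, hεG⟩ := hGpos
  have hG0 : ∀ x, 0 < G x := fun x => lt_of_lt_of_le hε (hεG x)
  have hGC : ∀ x, G x ≤ C := fun x => (le_abs_self _).trans (hC x)
  -- F
  set F : E → ℝ := fun x => ∫ z, f z ∂(P x) with hFdef
  have hFm : Measurable F := by
    have : StronglyMeasurable (fun p : E × E => f p.2) :=
      hf.stronglyMeasurable.comp_measurable measurable_snd
    exact this.integral_kernel_prod_right'.measurable
  set Cf : ℝ := |f x0| + 1 with hCf
  have hCf0 : 0 ≤ Cf := by positivity
  have hfb : ∀ x, |f x| ≤ Cf := fun x => by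
    have h1 := hosc x x0
    have h2 := abs_sub_abs_le_abs_sub (f x) (f x0)
    rw [hCf]; linarith
  have hfint : ∀ (τ : Measure E), IsProbabilityMeasure τ → Integrable f τ :=
    fun τ hτ => aux_int τ hf hfb
  have hFb : ∀ x, |F x| ≤ Cf := fun x => by
    calc |F x| ≤ ∫ z, |f z| ∂(P x) := by
          simpa [Real.norm_eq_abs] using norm_integral_le_integral_norm f (μ := P x)
      _ ≤ ∫ _z, Cf ∂(P x) :=
          integral_mono (hfint _ inferInstance).abs (integrable_const _) hfb
      _ = Cf := by simp
  -- G integrability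
  have hGint : ∀ (τ : Measure E), IsProbabilityMeasure τ → Integrable G τ :=
    fun τ hτ => aux_int τ hG hC
  have hFGint : ∀ (τ : Measure E), IsProbabilityMeasure τ →
      Integrable (fun x => F x * G x) τ := by
    intro τ hτ
    refine aux_int τ (hFm.mul hG) (C := Cf * C) (fun x => ?_)
    rw [abs_mul]
    exact mul_le_mul (hFb x) (hC x) (abs_nonneg _) hCf0
  set a : ℝ := ∫ x, G x ∂μ with ha
  set b : ℝ := ∫ x, G x ∂ν with hb
  have haε : ε ≤ a := by
    rw [ha]
    calc ε = ∫ _x, ε ∂μ := by simp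
      _ ≤ ∫ x, G x ∂μ := integral_mono (integrable_const _) (hGint μ inferInstance) hεG
  have hbε : ε ≤ b := by
    rw [hb]
    calc ε = ∫ _x, ε ∂ν := by simp
      _ ≤ ∫ x, G x ∂ν := integral_mono (integrable_const _) (hGint ν inferInstance) hεG
  have ha0 : 0 < a := lt_of_lt_of_le hε haε
  have hb0 : 0 < b := lt_of_lt_of_le hε hbε
  -- gbar
  set gbar : ℝ := ⨆ x, ⨆ y, G x / G y with hgbar
  have hinnerb : ∀ x, BddAbove (Set.range fun y => G x / G y) := fun x => by
    refine ⟨C / ε, Set.forall_mem_range.mpr fun y => ?_⟩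
    exact div_le_div₀ (le_trans hε.le ((hεG x0).trans (hGC x0))) (hGC x) hε (hεG y)
  have houterb : BddAbove (Set.range fun x => ⨆ y, G x / G y) := by
    refine ⟨C / ε, Set.forall_mem_range.mpr fun x => ?_⟩
    exact ciSup_le fun y =>
      div_le_div₀ (le_trans hε.le ((hεG x0).trans (hGC x0))) (hGC x) hε (hεG y)
  have hgb : ∀ x y, G x / G y ≤ gbar := fun x y =>
    le_trans (le_ciSup (hinnerb x) y) (le_ciSup houterb x)
  have hgbar1 : 1 ≤ gbar := by
    have := hgb x0 x0
    rwa [div_self (hG0 x0).ne'] at this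
  have hgbar0 : 0 ≤ gbar := le_trans zero_le_one hgbar1
  have hgmul : ∀ x y, G x ≤ gbar * G y := fun x y =>
    (div_le_iff₀ (hG0 y)).mp (hgb x y)
  have hkey : ∀ x, G x ≤ gbar * a := fun x => by
    calc G x = ∫ _y, G x ∂μ := by simp
      _ ≤ ∫ y, gbar * G y ∂μ :=
          integral_mono (integrable_const _) ((hGint μ inferInstance).const_mul _)
            (fun y => hgmul x y)
      _ = gbar * a := by rw [integral_const_mul, ha]
  -- beta
  set β : ℝ := sSup {r : ℝ | ∃ g : E → ℝ, Measurable g ∧ (∀ x y, |g x - g y| ≤ 1) ∧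
      r = ⨆ x, ⨆ y, |(∫ z, g z ∂(P x)) - ∫ z, g z ∂(P y)|} with hβ
  have hBbdd : BddAbove {r : ℝ | ∃ g : E → ℝ, Measurable g ∧ (∀ x y, |g x - g y| ≤ 1) ∧
      r = ⨆ x, ⨆ y, |(∫ z, g z ∂(P x)) - ∫ z, g z ∂(P y)|} := by
    refine ⟨2, fun r hr => ?_⟩
    obtain ⟨g, hg, hgo, rfl⟩ := hr
    refine Real.iSup_le (fun x => Real.iSup_le (fun y => ?_) (by norm_num)) (by norm_num)
    simpa using aux_diff (P x) (P y) hg hgo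
  have hFosc : ∀ x y, |F x - F y| ≤ β := by
    intro x y
    have hfam : ∀ x y : E, |F x - F y| ≤ 2 := fun x y => by
      simpa using aux_diff (P x) (P y) hf hosc
    have hin : ∀ x, BddAbove (Set.range fun y => |F x - F y|) := fun x =>
      ⟨2, Set.forall_mem_range.mpr fun y => hfam x y⟩
    have hout : BddAbove (Set.range fun x => ⨆ y, |F x - F y|) :=
      ⟨2, Set.forall_mem_range.mpr fun x => Real.iSup_le (fun y => hfam x y) (by norm_num)⟩
    have h1 : |F x - F y| ≤ ⨆ x, ⨆ y, |F x - F y| :=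
      le_trans (le_ciSup (hin x) y) (le_ciSup hout x)
    refine h1.trans (le_csSup hBbdd ?_)
    exact ⟨f, hf, hosc, rfl⟩
  have hβ0 : 0 ≤ β := by have := hFosc x0 x0; simpa using this
  -- c
  set c : ℝ := (∫ x, F x * G x ∂ν) / b with hcdef
  have hcb : ∀ x, |F x - c| ≤ β := by
    intro x
    have e : F x * b - ∫ y, F y * G y ∂ν = ∫ y, F x * G y - F y * G y ∂ν := by
      rw [integral_sub ((hGint ν inferInstance).const_mul _) (hFGint ν inferInstance),
        integral_const_mul, hb]
    have e2 : |∫ y, F x * G y - F y * G y ∂ν| ≤ β * b := by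
      calc |∫ y, F x * G y - F y * G y ∂ν| ≤ ∫ y, |F x * G y - F y * G y| ∂ν := by
            simpa [Real.norm_eq_abs] using
              norm_integral_le_integral_norm (fun y => F x * G y - F y * G y) (μ := ν)
        _ ≤ ∫ y, β * G y ∂ν := by
            refine integral_mono
              (((hGint ν inferInstance).const_mul _).sub (hFGint ν inferInstance)).abs
              ((hGint ν inferInstance).const_mul _) (fun y => ?_)
            have : F x * G y - F y * G y = (F x - F y) * G y := by ring
            rw [this, abs_mul, abs_of_pos (hG0 y)]
            exact mul_le_mul_of_nonneg_right (hFosc x y) (hG0 y).le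
        _ = β * b := by rw [integral_const_mul, hb]
    have e3 : F x - c = (F x * b - ∫ y, F y * G y ∂ν) / b := by
      rw [hcdef]; field_simp
    rw [e3, abs_div, abs_of_pos hb0, div_le_iff₀ hb0, e]
    exact e2
  -- h
  set h : E → ℝ := fun x => (F x - c) * G x with hhdef
  have hhm : Measurable h := (hFm.sub measurable_const).mul hG
  have hhb : ∀ x, |h x| ≤ β * (gbar * a) := fun x => by
    rw [hhdef]
    calc |(F x - c) * G x| = |F x - c| * |G x| := abs_mul _ _
      _ ≤ β * (gbar * a) := by
          rw [abs_of_pos (hG0 x)]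
          exact mul_le_mul (hcb x) (hkey x) (hG0 x).le hβ0
  have hhosc : ∀ x y, |h x - h y| ≤ 2 * (β * (gbar * a)) := fun x y => by
    have h1 := hhb x; have h2 := hhb y
    have h3 := abs_sub_le (h x) 0 (h y)
    simp only [sub_zero, zero_sub, abs_neg] at h3
    linarith
  have hD0 : 0 ≤ 2 * (β * (gbar * a)) := by positivity
  have htv := aux_tv μ ν hhm hD0 hhosc
  -- integral identities
  have hsplit : h = fun x => F x * G x - c * G x := funext fun x => by rw [hhdef]; ring
  have hνh : (∫ x, h x ∂ν) = 0 := by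
    rw [hsplit, integral_sub (hFGint ν inferInstance) ((hGint ν inferInstance).const_mul _),
      integral_const_mul, ← hb, hcdef]
    field_simp; simp
  have hμh : (∫ x, h x ∂μ) = (∫ x, F x * G x ∂μ) - c * a := by
    rw [hsplit, integral_sub (hFGint μ inferInstance) ((hGint μ inferInstance).const_mul _),
      integral_const_mul, ← ha]
  rw [hνh, sub_zero] at htv
  -- final assembly
  have egoal : (∫ x, F x * G x ∂μ) / a - c = (∫ x, h x ∂μ) / a := by
    rw [hμh]; field_simp
  rw [egoal, abs_div, abs_of_pos ha0, div_le_iff₀ ha0]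
  calc |∫ x, h x ∂μ| ≤ 2 * (β * (gbar * a)) *
        sSup {r : ℝ | ∃ g : E → ℝ, Measurable g ∧ (∀ x y, |g x - g y| ≤ 1) ∧
          r = |(∫ x, g x ∂μ) - ∫ x, g x ∂ν|} := htv
    _ = 2 * gbar * β *
        sSup {r : ℝ | ∃ g : E → ℝ, Measurable g ∧ (∀ x y, |g x - g y| ≤ 1) ∧
          r = |(∫ x, g x ∂μ) - ∫ x, g x ∂ν|} * a := by ring
end

section
/- Let μ be a probability measure on E, U : E → [0,∞) bounded measurable, m ≥ 1. Define S_μ(x,dy) = e^{-U(x)/m}·δ_x(dy) + (1 - e^{-U(x)/m})·Ψ_{e^{-U/m}}(μ)(dy) and the jump generator L̂_μ(f)(x) = U(x)·∫(f(y) - f(x)) μ(dy). Then for every bounded measurable f with osc(f) ≤ 1 and every x, |m·(S_μ(f)(x) - f(x)) - L̂_μ(f)(x)| ≤ c·‖U‖²/m for a universal constant c (e.g. c = 2 works). -/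
open MeasureTheory

set_option maxHeartbeats 1600000 in
theorem stmt15 {E : Type*} [MeasurableSpace E] (μ : Measure E) [IsProbabilityMeasure μ]
    (U : E → ℝ) (m : ℝ) (hm : 1 ≤ m)
    (hU : Measurable U) (hU0 : ∀ x, 0 ≤ U x)
    (hUbdd : BddAbove (Set.range fun x => |U x|)) :
    ∀ f : E → ℝ, Measurable f → (∀ x y, |f x - f y| ≤ 1) → ∀ x : E,
      |m * ((Real.exp (-U x / m) * f x
            + (1 - Real.exp (-U x / m)) *
              ((∫ y, f y * Real.exp (-U y / m) ∂μ) / (∫ y, Real.exp (-U y / m) ∂μ)))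
          - f x)
        - U x * ((∫ y, f y ∂μ) - f x)|
      ≤ 2 * (⨆ y, |U y|) ^ 2 / m := by
  intro f hf hosc x
  have hm0 : (0:ℝ) < m := lt_of_lt_of_le one_pos hm
  set C : ℝ := ⨆ y, |U y| with hCdef
  have hCub : ∀ y, U y ≤ C := fun y => (le_abs_self _).trans (le_ciSup hUbdd y)
  have hC0 : 0 ≤ C := le_trans (abs_nonneg (U x)) (le_ciSup hUbdd x)
  set E' : ℝ := Real.exp (-C / m) with hE'
  have hE0 : 0 < E' := Real.exp_pos _
  have hE1 : E' ≤ 1 :=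
    Real.exp_le_one_iff.mpr (div_nonpos_iff.mpr (Or.inr ⟨neg_nonpos.mpr hC0, hm0.le⟩))
  have hg_le1 : ∀ y, Real.exp (-U y / m) ≤ 1 := fun y =>
    Real.exp_le_one_iff.mpr (div_nonpos_iff.mpr (Or.inr ⟨neg_nonpos.mpr (hU0 y), hm0.le⟩))
  have hg_lb : ∀ y, E' ≤ Real.exp (-U y / m) := fun y =>
    Real.exp_le_exp.mpr ((div_le_div_iff_of_pos_right hm0).mpr (neg_le_neg (hCub y)))
  have hg_pos : ∀ y, 0 < Real.exp (-U y / m) := fun y => Real.exp_pos _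
  have bdd_int : ∀ (h : E → ℝ), Measurable h → ∀ B : ℝ, (∀ y, |h y| ≤ B) →
      Integrable h μ := by
    intro h hh B hB
    exact ⟨hh.aestronglyMeasurable, HasFiniteIntegral.of_bounded (C := B)
      (Filter.Eventually.of_forall fun y => by simpa [Real.norm_eq_abs] using hB y)⟩
  have hgm : Measurable fun y => Real.exp (-U y / m) := (hU.neg.div_const m).exp
  have ig : Integrable (fun y => Real.exp (-U y / m)) μ :=
    bdd_int _ hgm 1 (fun y => by rw [abs_of_pos (hg_pos y)]; exact hg_le1 y)
  have hfb : ∀ y, |f y| ≤ |f x| + 1 := by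
    intro y
    have h1 := hosc y x
    calc |f y| = |f x + (f y - f x)| := by ring_nf
    _ ≤ |f x| + |f y - f x| := abs_add_le _ _
    _ ≤ |f x| + 1 := by linarith
  have if' : Integrable f μ := bdd_int f hf (|f x| + 1) hfb
  have ifg : Integrable (fun y => f y * Real.exp (-U y / m)) μ :=
    bdd_int _ (hf.mul hgm) (|f x| + 1) (fun y => by
      rw [abs_mul, abs_of_pos (hg_pos y)]
      calc |f y| * Real.exp (-U y / m) ≤ (|f x| + 1) * 1 :=
        mul_le_mul (hfb y) (hg_le1 y) (hg_pos y).le (by positivity)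
      _ = |f x| + 1 := by ring)
  set Z : ℝ := ∫ y, Real.exp (-U y / m) ∂μ with hZdef
  set I : ℝ := ∫ y, f y * Real.exp (-U y / m) ∂μ with hIdef
  set F : ℝ := ∫ y, f y ∂μ with hFdef
  have hZ1 : Z ≤ 1 := by
    calc Z ≤ ∫ _, (1:ℝ) ∂μ := integral_mono ig (integrable_const 1) hg_le1
    _ = 1 := by simp
  have hZlb : E' ≤ Z := by
    calc E' = ∫ _, E' ∂μ := by simp
    _ ≤ Z := integral_mono (integrable_const _) ig hg_lb
  have hZ0 : 0 < Z := lt_of_lt_of_le hE0 hZlb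
  -- Bound 1 : |I/Z - f x| ≤ 1
  have hfgint : Integrable (fun y => (f y - f x) * Real.exp (-U y / m)) μ := by
    have : (fun y => (f y - f x) * Real.exp (-U y / m))
        = fun y => f y * Real.exp (-U y / m) - f x * Real.exp (-U y / m) := by
      funext y; ring
    rw [this]; exact ifg.sub (ig.const_mul (f x))
  have hIfx : I - f x * Z = ∫ y, (f y - f x) * Real.exp (-U y / m) ∂μ := by
    have : (fun y => (f y - f x) * Real.exp (-U y / m))
        = fun y => f y * Real.exp (-U y / m) - f x * Real.exp (-U y / m) := by
      funext y; ring
    rw [this, integral_sub ifg (ig.const_mul (f x)), integral_const_mul]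
  have hB1 : |I / Z - f x| ≤ 1 := by
    have h2 : |I - f x * Z| ≤ Z := by
      rw [hIfx]
      calc |∫ y, (f y - f x) * Real.exp (-U y / m) ∂μ|
          ≤ ∫ y, |f y - f x| * Real.exp (-U y / m) ∂μ := by
            simpa [Real.norm_eq_abs] using
              norm_integral_le_integral_norm (fun y => (f y - f x) * Real.exp (-U y / m)) (μ := μ)
        _ ≤ Z := by
            refine integral_mono ?_ ig (fun y => mul_le_of_le_one_left (hg_pos y).le (hosc y x))
            have habs : (fun y => |f y - f x| * Real.exp (-U y / m))
                = fun y => |(f y - f x) * Real.exp (-U y / m)| := by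
              funext y; rw [abs_mul, abs_of_pos (hg_pos y)]
            rw [habs]; exact hfgint.abs
    have heq : I / Z - f x = (I - f x * Z) / Z := by field_simp
    rw [heq, abs_div, abs_of_pos hZ0, div_le_one hZ0]
    exact h2
  -- Bound 3 : |I/Z - F| ≤ (exp(C/m) - 1)/2
  have hne : (Set.range f).Nonempty := ⟨f x, x, rfl⟩
  have hbdd : BddBelow (Set.range f) := by
    refine ⟨f x - 1, ?_⟩
    rintro v ⟨y, rfl⟩
    linarith [(abs_le.mp (hosc x y)).2]
  set c : ℝ := sInf (Set.range f) + 1/2 with hc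
  have hfc : ∀ y, |f y - c| ≤ 1/2 := by
    intro y
    have h1 : sInf (Set.range f) ≤ f y := csInf_le hbdd ⟨y, rfl⟩
    have h2 : f y - 1 ≤ sInf (Set.range f) := by
      refine le_csInf hne ?_
      rintro v ⟨z, rfl⟩
      linarith [(abs_le.mp (hosc y z)).2]
    rw [hc, abs_le]; constructor <;> linarith
  have hid : I - Z * F = ∫ y, (f y - c) * (Real.exp (-U y / m) - Z) ∂μ := by
    have hfe : (fun y => (f y - c) * (Real.exp (-U y / m) - Z))
        = fun y => (f y * Real.exp (-U y / m) - Z * f y)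
            - (c * Real.exp (-U y / m) - c * Z) := by
      funext y; ring
    have intZ : Integrable (fun y => Z * f y) μ := if'.const_mul Z
    have intc : Integrable (fun y => c * Real.exp (-U y / m)) μ := ig.const_mul c
    have int1 : Integrable (fun y => f y * Real.exp (-U y / m) - Z * f y) μ := ifg.sub intZ
    have int2 : Integrable (fun y => c * Real.exp (-U y / m) - c * Z) μ :=
      intc.sub (integrable_const _)
    rw [hfe, integral_sub int1 int2, integral_sub ifg intZ,
      integral_sub intc (integrable_const _),
      integral_const_mul, integral_const_mul, integral_const]
    simp [measure_univ]
    rw [← hIdef, ← hFdef, ← hZdef]; ring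
  have hgZ : ∀ y, |Real.exp (-U y / m) - Z| ≤ 1 - E' := fun y =>
    abs_le.mpr ⟨by linarith [hg_lb y], by linarith [hg_le1 y]⟩
  have hIZF : |I - Z * F| ≤ (1 - E') / 2 := by
    rw [hid]
    have h := norm_integral_le_of_norm_le_const (μ := μ)
      (f := fun y => (f y - c) * (Real.exp (-U y / m) - Z)) (C := (1 - E') / 2)
      (Filter.Eventually.of_forall fun y => by
        rw [Real.norm_eq_abs, abs_mul]
        calc |f y - c| * |Real.exp (-U y / m) - Z| ≤ (1/2) * (1 - E') :=
          mul_le_mul (hfc y) (hgZ y) (abs_nonneg _) (by norm_num)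
        _ = (1 - E') / 2 := by ring)
    simpa [Real.norm_eq_abs, measure_univ] using h
  have hB3 : |I / Z - F| ≤ (Real.exp (C / m) - 1) / 2 := by
    have heq : I / Z - F = (I - Z * F) / Z := by field_simp
    rw [heq, abs_div, abs_of_pos hZ0]
    calc |I - Z * F| / Z ≤ ((1 - E') / 2) / Z := by gcongr
    _ ≤ ((1 - E') / 2) / E' := by gcongr
    _ = (Real.exp (C / m) - 1) / 2 := by
        rw [hE', neg_div, Real.exp_neg]
        have h0 : (0:ℝ) < Real.exp (C / m) := Real.exp_pos _
        field_simp
  -- second-order Taylor bound for exp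
  have hexp2 : ∀ t : ℝ, |t| ≤ 1 → |Real.exp t - (1 + t)| ≤ 3/4 * t^2 := by
    intro t ht
    have h := Real.exp_bound ht (n := 2) (by norm_num)
    have hs : ∑ i ∈ Finset.range 2, t ^ i / (Nat.factorial i : ℝ) = 1 + t := by
      simp [Finset.sum_range_succ]
    rw [hs] at h
    refine h.trans (le_of_eq ?_)
    rw [sq_abs]
    norm_num [Nat.factorial]
    ring
  by_cases hCm : C ≤ m
  · -- main case: C ≤ m
    have hsle : U x / m ≤ 1 := (div_le_one hm0).mpr ((hCub x).trans hCm)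
    have hs0 : 0 ≤ U x / m := div_nonneg (hU0 x) hm0.le
    have h1 : |Real.exp (-U x / m) - (1 + -(U x / m))| ≤ 3/4 * (U x / m)^2 := by
      have := hexp2 (-(U x / m)) (by rw [abs_neg, abs_of_nonneg hs0]; exact hsle)
      simpa [neg_div, neg_sq] using this
    have h2 : Real.exp (C / m) - 1 ≤ C / m + 3/4 * (C / m)^2 := by
      have := hexp2 (C / m)
        (by rw [abs_of_nonneg (div_nonneg hC0 hm0.le)]; exact (div_le_one hm0).mpr hCm)
      linarith [(abs_le.mp this).2]
    have key : m * ((Real.exp (-U x / m) * f x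
          + (1 - Real.exp (-U x / m)) * (I / Z)) - f x) - U x * (F - f x)
        = (m * (1 - Real.exp (-U x / m)) - U x) * (I / Z - f x)
          + U x * (I / Z - F) := by ring
    rw [key]
    have hb1 : |(m * (1 - Real.exp (-U x / m)) - U x) * (I / Z - f x)|
        ≤ 3/4 * (U x)^2 / m := by
      rw [abs_mul]
      have hA : |m * (1 - Real.exp (-U x / m)) - U x| ≤ 3/4 * (U x)^2 / m := by
        have heq : m * (1 - Real.exp (-U x / m)) - U x
            = -(m * (Real.exp (-U x / m) - (1 + -(U x / m)))) := by
          field_simp; ring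
        rw [heq, abs_neg, abs_mul, abs_of_pos hm0]
        calc m * |Real.exp (-U x / m) - (1 + -(U x / m))| ≤ m * (3/4 * (U x / m)^2) :=
          mul_le_mul_of_nonneg_left h1 hm0.le
        _ = 3/4 * (U x)^2 / m := by field_simp
      calc |m * (1 - Real.exp (-U x / m)) - U x| * |I / Z - f x|
          ≤ (3/4 * (U x)^2 / m) * 1 := by
            exact mul_le_mul hA hB1 (abs_nonneg _) (by positivity)
      _ = 3/4 * (U x)^2 / m := by ring
    have hb2 : |U x * (I / Z - F)| ≤ U x * ((Real.exp (C / m) - 1) / 2) := by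
      rw [abs_mul, abs_of_nonneg (hU0 x)]
      exact mul_le_mul_of_nonneg_left hB3 (hU0 x)
    have hexp_nn : 0 ≤ Real.exp (C / m) - 1 := by
      have : (1:ℝ) = Real.exp 0 := (Real.exp_zero).symm
      rw [this]
      have := Real.exp_le_exp.mpr (div_nonneg hC0 hm0.le)
      linarith [Real.exp_le_exp.mpr (div_nonneg hC0 hm0.le)]
    have hb2' : U x * ((Real.exp (C / m) - 1) / 2)
        ≤ C * ((C / m + 3/4 * (C / m)^2) / 2) := by
      have e1 : U x * ((Real.exp (C / m) - 1) / 2) ≤ C * ((Real.exp (C / m) - 1) / 2) :=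
        mul_le_mul_of_nonneg_right (hCub x) (by linarith)
      have e2 : C * ((Real.exp (C / m) - 1) / 2) ≤ C * ((C / m + 3/4 * (C / m)^2) / 2) :=
        mul_le_mul_of_nonneg_left (by linarith) hC0
      linarith
    calc |(m * (1 - Real.exp (-U x / m)) - U x) * (I / Z - f x) + U x * (I / Z - F)|
        ≤ |(m * (1 - Real.exp (-U x / m)) - U x) * (I / Z - f x)|
          + |U x * (I / Z - F)| := abs_add_le _ _
    _ ≤ 3/4 * (U x)^2 / m + C * ((C / m + 3/4 * (C / m)^2) / 2) := by linarith
    _ ≤ 2 * C^2 / m := by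
        have hU2 : (U x)^2 ≤ C^2 := by nlinarith [hU0 x, hCub x]
        rw [show 3/4 * (U x)^2 / m + C * ((C / m + 3/4 * (C / m)^2) / 2)
              = (3/4 * (U x)^2 * m + 1/2 * C^2 * m + 3/8 * C^3) / m^2 by
            field_simp; ring,
          show 2 * C^2 / m = 2 * C^2 * m / m^2 by field_simp,
          div_le_div_iff₀ (by positivity) (by positivity)]
        have k1 : (U x)^2 * m^3 ≤ C^2 * m^3 :=
          mul_le_mul_of_nonneg_right hU2 (by positivity)
        have k2 : C^3 * m^2 ≤ C^2 * m * m^2 :=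
          mul_le_mul_of_nonneg_right
            (by nlinarith [mul_le_mul_of_nonneg_left hCm (sq_nonneg C)]) (by positivity)
        nlinarith [k1, k2, mul_nonneg (sq_nonneg C) (pow_nonneg hm0.le 3)]
  · -- easy case: m < C
    push_neg at hCm
    have key : m * ((Real.exp (-U x / m) * f x
          + (1 - Real.exp (-U x / m)) * (I / Z)) - f x) - U x * (F - f x)
        = m * (1 - Real.exp (-U x / m)) * (I / Z - f x) - U x * (F - f x) := by ring
    rw [key]
    have hA0 : 0 ≤ m * (1 - Real.exp (-U x / m)) :=
      mul_nonneg hm0.le (by linarith [hg_le1 x])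
    have hAle : m * (1 - Real.exp (-U x / m)) ≤ U x := by
      have h' : 1 - U x / m ≤ Real.exp (-U x / m) := by
        have h0 := Real.add_one_le_exp (-(U x / m))
        rw [neg_div]
        linarith
      have h'' : m * (1 - Real.exp (-U x / m)) ≤ m * (U x / m) :=
        mul_le_mul_of_nonneg_left (by linarith) hm0.le
      have h3 : m * (U x / m) = U x := by field_simp
      linarith
    have hFfx : |F - f x| ≤ 1 := by
      have heq : F - f x = ∫ y, (f y - f x) ∂μ := by
        rw [integral_sub if' (integrable_const _), integral_const]
        simp [hFdef]
      rw [heq]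
      have h := norm_integral_le_of_norm_le_const (μ := μ)
        (f := fun y => f y - f x) (C := 1)
        (Filter.Eventually.of_forall fun y => by
          rw [Real.norm_eq_abs]; exact hosc y x)
      simpa [Real.norm_eq_abs, measure_univ] using h
    have h1 : |m * (1 - Real.exp (-U x / m)) * (I / Z - f x)| ≤ U x := by
      rw [abs_mul, abs_of_nonneg hA0]
      calc m * (1 - Real.exp (-U x / m)) * |I / Z - f x| ≤ U x * 1 :=
        mul_le_mul hAle hB1 (abs_nonneg _) (hU0 x)
      _ = U x := by ring
    have h2 : |U x * (F - f x)| ≤ U x := by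
      rw [abs_mul, abs_of_nonneg (hU0 x)]
      calc U x * |F - f x| ≤ U x * 1 := mul_le_mul_of_nonneg_left hFfx (hU0 x)
      _ = U x := by ring
    calc |m * (1 - Real.exp (-U x / m)) * (I / Z - f x) - U x * (F - f x)|
        ≤ |m * (1 - Real.exp (-U x / m)) * (I / Z - f x)| + |U x * (F - f x)| :=
          abs_sub _ _
    _ ≤ 2 * U x := by linarith
    _ ≤ 2 * C^2 / m := by
        rw [le_div_iff₀ hm0]
        nlinarith [mul_le_mul_of_nonneg_right (hCub x) hm0.le,
          mul_le_mul_of_nonneg_left hCm.le hC0]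
end

section
/- Let μ be a probability measure on E and V : E → ℝ bounded measurable, m ≥ 1. For x ∈ E, define a(x) = μ((e^{V/m} - e^{V(x)/m})₊)/μ(e^{V/m}). Then 0 ≤ a(x) ≤ 1 for all x. Moreover, the kernel S(x,dy) = (1 - a(x))·δ_x(dy) + a(x)·Ψ_{(e^{V/m} - e^{V(x)/m})₊}(μ)(dy) (interpreting the second term as 0 when a(x) = 0) satisfies μS = Ψ_{e^{V/m}}(μ). -/
open MeasureTheory

private lemma bdd_int {E : Type*} [MeasurableSpace E] (μ : Measure E) [IsFiniteMeasure μ]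
    {f : E → ℝ} (hf : Measurable f) {C : ℝ} (h : ∀ x, |f x| ≤ C) : Integrable f μ :=
  (integrable_const C).mono' hf.aestronglyMeasurable
    (Filter.Eventually.of_forall fun x => by simpa [Real.norm_eq_abs] using h x)

theorem stmt16 {E : Type*} [MeasurableSpace E] (μ : Measure E) [IsProbabilityMeasure μ]
    (V : E → ℝ) (m : ℝ) (hm : 1 ≤ m)
    (hV : Measurable V) (hVb : ∃ C, ∀ x, |V x| ≤ C) :
    (∀ x : E,
        0 ≤ (∫ y, max (Real.exp (V y / m) - Real.exp (V x / m)) 0 ∂μ) /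
              (∫ y, Real.exp (V y / m) ∂μ) ∧
        (∫ y, max (Real.exp (V y / m) - Real.exp (V x / m)) 0 ∂μ) /
              (∫ y, Real.exp (V y / m) ∂μ) ≤ 1) ∧
    (∀ f : E → ℝ, Measurable f → (∃ C, ∀ x, |f x| ≤ C) →
      ∫ x, ((1 - (∫ y, max (Real.exp (V y / m) - Real.exp (V x / m)) 0 ∂μ) /
                    (∫ y, Real.exp (V y / m) ∂μ)) * f x
          + ((∫ y, max (Real.exp (V y / m) - Real.exp (V x / m)) 0 ∂μ) /
                (∫ y, Real.exp (V y / m) ∂μ)) *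
            ((∫ y, f y * max (Real.exp (V y / m) - Real.exp (V x / m)) 0 ∂μ) /
              (∫ y, max (Real.exp (V y / m) - Real.exp (V x / m)) 0 ∂μ))) ∂μ
        = (∫ y, f y * Real.exp (V y / m) ∂μ) / (∫ y, Real.exp (V y / m) ∂μ)) := by
  obtain ⟨C, hC⟩ := hVb
  have hm0 : (0:ℝ) < m := lt_of_lt_of_le one_pos hm
  set c : E → ℝ := fun x => Real.exp (V x / m) with hcdef
  have hce : ∀ x, Real.exp (V x / m) = c x := fun x => rfl
  have hcm : Measurable c := (hV.div_const m).exp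
  have hcpos : ∀ x, 0 < c x := fun x => Real.exp_pos _
  have hcub : ∀ x, c x ≤ Real.exp (C / m) := fun x =>
    Real.exp_le_exp.2 (by gcongr; exact (abs_le.1 (hC x)).2)
  have hclb : ∀ x, Real.exp (-C / m) ≤ c x := fun x =>
    Real.exp_le_exp.2 (by gcongr; exact (abs_le.1 (hC x)).1)
  have hcabs : ∀ x, |c x| ≤ Real.exp (C / m) := fun x => by
    rw [abs_of_pos (hcpos x)]; exact hcub x
  have hci : Integrable c μ := bdd_int μ hcm hcabs
  set Z : ℝ := ∫ y, c y ∂μ with hZdef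
  have hZlb : Real.exp (-C / m) ≤ Z := by
    have := integral_mono (integrable_const (Real.exp (-C / m))) hci hclb
    simpa using this
  have hZpos : 0 < Z := lt_of_lt_of_le (Real.exp_pos _) hZlb
  have hZub : Z ≤ Real.exp (C / m) := by
    have := integral_mono hci (integrable_const (Real.exp (C / m))) hcub
    simpa using this
  set w : E → E → ℝ := fun x y => max (c y - c x) 0 with hwdef
  have hwe : ∀ x y, max (c y - c x) 0 = w x y := fun x y => rfl
  have hwnn : ∀ x y, 0 ≤ w x y := fun x y => le_max_right _ _
  have hwle : ∀ x y, w x y ≤ c y := fun x y =>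
    max_le (sub_le_self _ (hcpos x).le) (hcpos y).le
  have hwabs : ∀ x y, |w x y| ≤ Real.exp (C / m) := fun x y => by
    rw [abs_of_nonneg (hwnn x y)]; exact (hwle x y).trans (hcub y)
  have hwm : ∀ x, Measurable (w x) := fun x =>
    (hcm.sub_const (c x)).max measurable_const
  have hwint : ∀ x, Integrable (w x) μ := fun x => bdd_int μ (hwm x) (hwabs x)
  set g : E → ℝ := fun x => ∫ y, w x y ∂μ with hgdef
  have hge : ∀ x, (∫ y, w x y ∂μ) = g x := fun x => rfl
  have hgnn : ∀ x, 0 ≤ g x := fun x => integral_nonneg (hwnn x)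
  have hgleZ : ∀ x, g x ≤ Z := fun x => integral_mono (hwint x) hci (hwle x)
  have hgabs : ∀ x, |g x| ≤ Real.exp (C / m) := fun x => by
    rw [abs_of_nonneg (hgnn x)]; exact (hgleZ x).trans hZub
  have hwprodm : Measurable fun p : E × E => w p.1 p.2 :=
    ((hcm.comp measurable_snd).sub (hcm.comp measurable_fst)).max measurable_const
  have hgm : Measurable g :=
    (hwprodm.stronglyMeasurable.integral_prod_right').measurable
  simp only [hce, hwe, hge]
  constructor
  · intro x
    exact ⟨div_nonneg (hgnn x) hZpos.le, (div_le_one hZpos).2 (hgleZ x)⟩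
  · intro f hf hfb
    obtain ⟨Cf, hCf⟩ := hfb
    set Cf' : ℝ := max Cf 0 with hCf'def
    have hCf'nn : 0 ≤ Cf' := le_max_right _ _
    have hCfb : ∀ x, |f x| ≤ Cf' := fun x => (hCf x).trans (le_max_left _ _)
    have hfi : Integrable f μ := bdd_int μ hf hCfb
    set H : E → ℝ := fun x => ∫ y, f y * w x y ∂μ with hHdef
    have hHe : ∀ x, (∫ y, f y * w x y ∂μ) = H x := fun x => rfl
    simp only [hHe]
    have hfwabs : ∀ x y, |f y * w x y| ≤ Cf' * Real.exp (C / m) := fun x y => by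
      rw [abs_mul]
      exact mul_le_mul (hCfb y) (hwabs x y) (abs_nonneg _) hCf'nn
    have hfwint : ∀ x, Integrable (fun y => f y * w x y) μ := fun x =>
      bdd_int μ (hf.mul (hwm x)) (hfwabs x)
    have hHabs : ∀ x, |H x| ≤ Cf' * Real.exp (C / m) := fun x => by
      have := norm_integral_le_of_norm_le_const (μ := μ)
        (f := fun y => f y * w x y) (C := Cf' * Real.exp (C / m))
        (Filter.Eventually.of_forall fun y => by
          rw [Real.norm_eq_abs]; exact hfwabs x y)
      rw [Real.norm_eq_abs] at this
      simpa using this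
    have hHm : Measurable H :=
      (((hf.comp measurable_snd).mul hwprodm).stronglyMeasurable.integral_prod_right').measurable
    have hHi : Integrable H μ := bdd_int μ hHm hHabs
    have hfgi : Integrable (fun x => f x * g x) μ := by
      refine bdd_int μ (hf.mul hgm) (C := Cf' * Real.exp (C / m)) fun x => ?_
      rw [abs_mul]
      exact mul_le_mul (hCfb x) (hgabs x) (abs_nonneg _) hCf'nn
    have hfci : Integrable (fun x => f x * c x) μ := by
      refine bdd_int μ (hf.mul hcm) (C := Cf' * Real.exp (C / m)) fun x => ?_
      rw [abs_mul]
      exact mul_le_mul (hCfb x) (hcabs x) (abs_nonneg _) hCf'nn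
    have key : ∀ x, (1 - g x / Z) * f x + (g x / Z) * (H x / g x)
        = f x - f x * g x / Z + H x / Z := by
      intro x
      rcases eq_or_ne (g x) 0 with h0 | h0
      · have hw0 : (fun y => w x y) =ᵐ[μ] 0 :=
          (integral_eq_zero_iff_of_nonneg (hwnn x) (hwint x)).1 h0
        have hH0 : H x = 0 := by
          rw [hHdef]
          calc (∫ y, f y * w x y ∂μ) = ∫ y, (0:ℝ) ∂μ :=
                integral_congr_ae (hw0.mono fun y hy => by simp [Pi.zero_apply] at hy; simp [hy])
            _ = 0 := integral_zero _ _
        rw [h0, hH0]; simp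
      · field_simp
    rw [integral_congr_ae (Filter.Eventually.of_forall key)]
    have h3 : Integrable (fun x => f x * g x / Z) μ := hfgi.div_const Z
    have h1 : Integrable (fun x => f x - f x * g x / Z) μ := hfi.sub h3
    have h2 : Integrable (fun x => H x / Z) μ := hHi.div_const Z
    rw [integral_add h1 h2, integral_sub hfi h3, integral_div, integral_div]
    -- Fubini for ∫ H
    have hprodint : Integrable (fun p : E × E => f p.2 * w p.1 p.2) (μ.prod μ) :=
      bdd_int _ ((hf.comp measurable_snd).mul hwprodm) (fun p => hfwabs p.1 p.2)
    have hswap : (∫ x, H x ∂μ) = ∫ y, f y * (∫ x, w x y ∂μ) ∂μ := by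
      have := MeasureTheory.integral_integral_swap
        (f := fun x y => f y * w x y) hprodint
      rw [hHdef]
      rw [this]
      simp only [integral_const_mul]
    have hG : ∀ z, (∫ x, w x z ∂μ) = g z + (c z - Z) := by
      intro z
      have h1 : ∀ x, w x z = w z x + (c z - c x) := by
        intro x
        have h2 : max (c z - c x) 0 - max (-(c z - c x)) 0 = c z - c x :=
          max_zero_sub_max_neg_zero_eq_self _
        rw [neg_sub] at h2
        simp only [hwdef]
        linarith
      have ha : Integrable (fun x => c z - c x) μ := (integrable_const (c z)).sub hci
      rw [integral_congr_ae (Filter.Eventually.of_forall h1),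
        integral_add (hwint z) ha, integral_sub (integrable_const (c z)) hci]
      simp [hge, hZdef]
    have hswap2 : (∫ x, H x ∂μ)
        = (∫ x, f x * g x ∂μ) + ((∫ x, f x * c x ∂μ) - Z * ∫ x, f x ∂μ) := by
      rw [hswap, integral_congr_ae (Filter.Eventually.of_forall fun z => by rw [hG z])]
      have e1 : ∀ z, f z * (g z + (c z - Z)) = f z * g z + (f z * c z - Z * f z) := by
        intro z; ring
      have hb : Integrable (fun x => Z * f x) μ := hfi.const_mul Z
      have hcc : Integrable (fun x => f x * c x - Z * f x) μ := hfci.sub hb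
      rw [integral_congr_ae (Filter.Eventually.of_forall e1),
        integral_add hfgi hcc, integral_sub hfci hb, integral_const_mul]
    rw [hswap2]
    field_simp
    ring
end
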